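/- Let n ≥ 3 and let μ₁ > 0 and μ₂, …, μₙ be real numbers with μ₁ + μ₂ + ⋯ + μₙ = 0 and μ₁ ≥ 2μⱼ for all j ≥ 2. Define β = μ₁² + 3∑_{j≥2} μⱼ². If (n+1)μ₁ − μ₁³ + 2∑_{j≥2} μⱼ³ − 3μ₁∑_{j≥2} μⱼ² ≤ 0, then β ≥ (n+2)/√n · μ₁. -/

import Mathlib

open Finset Real

lemma aux_D {n : ℝ} (hn : 3 ≤ n) :
    (n-3)^2*(n+2)^3 ≤ 27/4*(n+1)^2*(n-2)^3 := by
  nlinarith [sq_nonneg (n-3), sq_nonneg n, sq_nonneg (n*(n-3)), sq_nonneg ((n-3)*(n+2)), sq_nonneg (n*n-3)]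

lemma key_id (n s a p M u : ℝ) (hn : n = s^2) (hM : M = (n+1)*a/2 - (n-2)*p)
    (hu : u = M - p) :
    (n-1)^2 * (3*s*((n+1)*a/2*(1+a^2/4) + (p^2+2*p*M)*((n+1)*a/2) - (n-1)*(p^2*M))
      - ((3*n+5)*s*a^2/4 + (n+2)*a)*(2*p+M))
    = 3/2*(n+1)*a*(n-1-s*a)*((n-1)*s-2*a) - (n-4)*(n+2)*(a*u*(n-1-s*a)) - 3*(n-2)*s*u^3 := by
  subst hu; subst hM; subst hn; ring

lemma idF2 (n s a p M u : ℝ) (hn : n = s^2) (hM : M = (n+1)*a/2 - (n-2)*p)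
    (hu : u = M - p) :
    (n-1)*(((3*n+5)*s*a^2/4 + (n+2)*a) - 3*s*(M^2+(n-2)*p^2))
    = (n+2)*a*(n-1-s*a) - 3*(n-2)*s*u^2 := by
  subst hu; subst hM; subst hn; ring

lemma key2 (n s a u : ℝ) (hn : 3 ≤ n) (hs : s^2 = n) (hs0 : 0 < s)
    (ha : 0 < a) (hu : 0 ≤ u) (hv : s*a ≤ n-1)
    (hG2 : 3*(n-2)*s*u^2 ≤ (n+2)*(a*(n-1-s*a))) :
    0 ≤ 3/2*(n+1)*a*(n-1-s*a)*((n-1)*s-2*a) - (n-4)*(n+2)*(a*u*(n-1-s*a))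
        - 3*(n-2)*s*u^3 := by
  have hv0 : 0 ≤ n - 1 - s*a := by linarith
  have ha0 : 0 ≤ s * a := by positivity
  have hn2 : (0:ℝ) < n - 2 := by linarith
  -- u² bound
  have hu2 : 3*(n-2)*n*u^2 ≤ (n+2)*(n-1)^2 := by
    have hx : s*(3*(n-2)*s*u^2) ≤ s*((n+2)*(a*(n-1-s*a))) :=
      mul_le_mul_of_nonneg_left hG2 hs0.le
    have hx2 : s*(3*(n-2)*s*u^2) = 3*(n-2)*n*u^2 := by rw [← hs]; ring
    have hx3 : s*((n+2)*(a*(n-1-s*a))) = (n+2)*((s*a)*(n-1-s*a)) := by ring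
    have hx4 : (s*a)*(n-1-s*a) ≤ (n-1)*(n-1) :=
      mul_le_mul hv (by linarith) hv0 (by linarith)
    nlinarith [hx, hx2, hx3, hx4]
  -- (n-1)s - 2a ≥ (n-1)(n-2)/s
  have h1 : (n-1)*(n-2) ≤ s*((n-1)*s - 2*a) := by nlinarith
  have hW : 0 ≤ 3/2*(n+1)*((n-1)*s-2*a) - (n-3)*(n+2)*u := by
    have hA2 : 0 ≤ s*((n-3)*(n+2)*u) := by
      apply mul_nonneg hs0.le
      apply mul_nonneg (mul_nonneg (by linarith) (by linarith)) hu
    have hK : 3/2*(n+1)*((n-1)*(n-2)) ≤ s*(3/2*(n+1)*((n-1)*s-2*a)) := by nlinarith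
    have hsq : (s*((n-3)*(n+2)*u))^2 ≤ (3/2*(n+1)*((n-1)*(n-2)))^2 := by
      have e1 : (s*((n-3)*(n+2)*u))^2 = (n-3)^2*(n+2)^2*(n*u^2) := by
        rw [← hs]; ring
      rw [e1]
      nlinarith [mul_le_mul_of_nonneg_left hu2 (by positivity : (0:ℝ) ≤ (n-3)^2*(n+2)^2),
        mul_le_mul_of_nonneg_left (aux_D hn) (by positivity : (0:ℝ) ≤ (n-1)^2), hn2]
    have hK0 : (0:ℝ) ≤ 3/2*(n+1)*((n-1)*(n-2)) := by
      apply mul_nonneg (by linarith)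
      apply mul_nonneg (by linarith) (by linarith)
    have hKA : s*((n-3)*(n+2)*u) ≤ 3/2*(n+1)*((n-1)*(n-2)) :=
      le_of_pow_le_pow_left₀ two_ne_zero hK0 hsq
    have hKA2 : s*((n-3)*(n+2)*u) ≤ s*(3/2*(n+1)*((n-1)*s-2*a)) := by linarith
    nlinarith [hKA2, hs0]
  nlinarith [mul_nonneg (mul_nonneg ha.le hv0) hW, mul_le_mul_of_nonneg_right hG2 hu]

set_option maxHeartbeats 1600000 in
theorem stmt_6 (n : ℕ) (hn : 3 ≤ n) (μ : ℕ → ℝ)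
    (hμ1 : 0 < μ 1)
    (hsum : ∑ j ∈ Icc 1 n, μ j = 0)
    (hmax : ∀ j ∈ Icc 2 n, μ 1 ≥ 2 * μ j)
    (β : ℝ) (hβ : β = (μ 1)^2 + 3 * ∑ j ∈ Icc 2 n, (μ j)^2)
    (h : ((n:ℝ) + 1) * μ 1 - (μ 1)^3 + 2 * ∑ j ∈ Icc 2 n, (μ j)^3
        - 3 * μ 1 * ∑ j ∈ Icc 2 n, (μ j)^2 ≤ 0) :
    β ≥ ((n:ℝ) + 2) / Real.sqrt n * μ 1 := by
  set a := μ 1 with ha_def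
  set s := Real.sqrt n with hs_def
  have hnR : (3:ℝ) ≤ (n:ℝ) := by exact_mod_cast hn
  have hs : s^2 = n := Real.sq_sqrt (by positivity)
  have hs0 : 0 < s := Real.sqrt_pos.mpr (by positivity)
  clear_value a s
  -- basic sums
  have h1n : (1:ℕ) ∉ Icc 2 n := by simp
  have hins : Icc 1 n = insert 1 (Icc 2 n) := by
    ext x; simp only [Finset.mem_Icc, Finset.mem_insert]; omega
  have hS1 : ∑ j ∈ Icc 2 n, μ j = -a := by
    rw [hins, Finset.sum_insert h1n] at hsum; linarith
  clear hins h1n hsum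
  have hcard : (Icc 2 n).card = n - 1 := by rw [Nat.card_Icc]; omega
  have hcardR : ((Icc 2 n).card : ℝ) = (n:ℝ) - 1 := by
    rw [hcard, Nat.cast_sub (by omega), Nat.cast_one]
  -- lambda sums
  have hL1 : ∑ j ∈ Icc 2 n, (a/2 - μ j) = ((n:ℝ)+1)*a/2 := by
    rw [Finset.sum_sub_distrib, Finset.sum_const, nsmul_eq_mul, hcardR, hS1]; ring
  have E2 : ∑ j ∈ Icc 2 n, (a/2 - μ j)^2
      = ((n:ℝ)+3)*(a^2/4) + ∑ j ∈ Icc 2 n, (μ j)^2 := by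
    calc ∑ j ∈ Icc 2 n, (a/2 - μ j)^2
        = ∑ j ∈ Icc 2 n, (a^2/4 - a * μ j + (μ j)^2) :=
          Finset.sum_congr rfl fun j _ => by ring
      _ = ∑ _j ∈ Icc 2 n, a^2/4 - a * ∑ j ∈ Icc 2 n, μ j + ∑ j ∈ Icc 2 n, (μ j)^2 := by
          rw [Finset.sum_add_distrib, Finset.sum_sub_distrib, Finset.mul_sum]
      _ = ((n:ℝ)+3)*(a^2/4) + ∑ j ∈ Icc 2 n, (μ j)^2 := by
          rw [Finset.sum_const, nsmul_eq_mul, hcardR, hS1]; ring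
  have E3 : ∑ j ∈ Icc 2 n, (a/2 - μ j)^3
      = ((n:ℝ)+5)*(a^3/8) + (3*a/2) * ∑ j ∈ Icc 2 n, (μ j)^2
        - ∑ j ∈ Icc 2 n, (μ j)^3 := by
    calc ∑ j ∈ Icc 2 n, (a/2 - μ j)^3
        = ∑ j ∈ Icc 2 n, (a^3/8 - (3*a^2/4) * μ j + (3*a/2) * (μ j)^2 - (μ j)^3) :=
          Finset.sum_congr rfl fun j _ => by ring
      _ = ∑ _j ∈ Icc 2 n, a^3/8 - (3*a^2/4) * ∑ j ∈ Icc 2 n, μ j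
            + (3*a/2) * ∑ j ∈ Icc 2 n, (μ j)^2 - ∑ j ∈ Icc 2 n, (μ j)^3 := by
          rw [Finset.sum_sub_distrib, Finset.sum_add_distrib, Finset.sum_sub_distrib,
            Finset.mul_sum, Finset.mul_sum]
      _ = _ := by rw [Finset.sum_const, nsmul_eq_mul, hcardR, hS1]; ring
  set L2 : ℝ := ∑ j ∈ Icc 2 n, (a/2 - μ j)^2 with hL2_def
  set L3 : ℝ := ∑ j ∈ Icc 2 n, (a/2 - μ j)^3 with hL3_def
  clear_value L2 L3
  have hβL : β = 3*L2 - (3*(n:ℝ)+5)*a^2/4 := by rw [hβ]; linear_combination -3*E2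
  have hT : ((n:ℝ)+1)*a/2*(1+a^2/4) ≤ L3 := by
    rw [E3]; nlinarith [h]
  clear h hβ E2 E3
  -- goal reduction
  rw [ge_iff_le, div_mul_eq_mul_div, div_le_iff₀ hs0]
  have hβs : β * s = 3*(s*L2) - (3*(n:ℝ)+5)*s*a^2/4 := by rw [hβL]; ring
  -- final step lemma: enough to show R' ≤ 3 s L2
  have final : (3*(n:ℝ)+5)*s*a^2/4 + ((n:ℝ)+2)*a ≤ 3*(s*L2) →
      ((n:ℝ)+2)*a ≤ β * s := by intro hR; rw [hβs]; linarith
  by_cases hcase : (n:ℝ) - 1 ≤ s * a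
  · -- large a: plain Cauchy-Schwarz
    apply final
    have hCS : (∑ j ∈ Icc 2 n, (a/2 - μ j))^2
        ≤ ((Icc 2 n).card : ℝ) * ∑ j ∈ Icc 2 n, (a/2 - μ j)^2 :=
      sq_sum_le_card_mul_sum_sq
    rw [hL1, hcardR, ← hL2_def] at hCS
    have h1 : s*((((n:ℝ)+1)*a/2)^2) ≤ s*(((n:ℝ)-1)*L2) :=
      mul_le_mul_of_nonneg_left hCS hs0.le
    have h2 : 0 ≤ ((n:ℝ)+2)*a*(s*a - ((n:ℝ)-1)) := by
      apply mul_nonneg (mul_nonneg (by linarith) hμ1.le); linarith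
    nlinarith [h1, h2]
  · push_neg at hcase
    -- max element
    have hne : (Icc 2 n).Nonempty := ⟨2, by simp; omega⟩
    obtain ⟨j₀, hj₀, hmaxj⟩ := Finset.exists_max_image (Icc 2 n) (fun j => a/2 - μ j) hne
    set M : ℝ := a/2 - μ j₀ with hM_def
    clear_value M
    have hlam0 : ∀ j ∈ Icc 2 n, 0 ≤ a/2 - μ j := fun j hj => by
      have := hmax j hj; linarith
    have hM0 : 0 ≤ M := by rw [hM_def]; exact hlam0 j₀ hj₀
    have hn2R : (0:ℝ) < (n:ℝ) - 2 := by linarith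
    set p : ℝ := (((n:ℝ)+1)*a/2 - M)/((n:ℝ)-2) with hp_def
    clear_value p
    have hrel : M = ((n:ℝ)+1)*a/2 - ((n:ℝ)-2)*p := by
      rw [hp_def]; field_simp; ring
    -- erase facts
    have hcarde : (((Icc 2 n).erase j₀).card : ℝ) = (n:ℝ) - 2 := by
      have h1c : (1:ℕ) ≤ (Icc 2 n).card := by rw [hcard]; omega
      rw [Finset.card_erase_of_mem hj₀, Nat.cast_sub h1c, hcardR, Nat.cast_one]; ring
    have hE1 : ∑ j ∈ (Icc 2 n).erase j₀, (a/2 - μ j) = ((n:ℝ)+1)*a/2 - M := by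
      have h := Finset.sum_erase_add (Icc 2 n) (fun j => a/2 - μ j) hj₀
      rw [hL1, ← hM_def] at h; linarith
    have hE2 : ∑ j ∈ (Icc 2 n).erase j₀, (a/2 - μ j)^2 = L2 - M^2 := by
      have h := Finset.sum_erase_add (Icc 2 n) (fun j => (a/2 - μ j)^2) hj₀
      rw [← hL2_def] at h
      rw [← hM_def] at h
      linear_combination h
    have hp0 : 0 ≤ p := by
      rw [hp_def]
      apply div_nonneg _ hn2R.le
      rw [← hE1]
      exact Finset.sum_nonneg fun j hj => hlam0 j (Finset.mem_of_mem_erase hj)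
    have hpM : p ≤ M := by
      rw [hp_def, div_le_iff₀ hn2R]
      have h := Finset.sum_le_card_nsmul ((Icc 2 n).erase j₀) (fun j => a/2 - μ j) M
        (fun j hj => hmaxj j (Finset.mem_of_mem_erase hj))
      simp only [nsmul_eq_mul] at h
      rw [hcarde, hE1] at h
      linarith only [h]
    have hMpos : 0 < M := by
      have h1 : ((n:ℝ)-2)*p ≤ ((n:ℝ)-2)*M := mul_le_mul_of_nonneg_left hpM hn2R.le
      have h2 : 0 < ((n:ℝ)+1)*a/2 := by positivity
      have h4 : 0 < ((n:ℝ)-1)*M := by linarith only [h1, h2, hrel]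
      have h5 : (0:ℝ) < (n:ℝ)-1 := by linarith only [hnR]
      by_contra hcon
      push_neg at hcon
      have h6 : 0 ≤ ((n:ℝ)-1)*(-M) := mul_nonneg h5.le (neg_nonneg.mpr hcon)
      linarith only [h4, h6]
    -- Cauchy-Schwarz on erase
    have hCS2 : ((n:ℝ)-2)*(((n:ℝ)-2)*p^2) ≤ ((n:ℝ)-2)*(L2 - M^2) := by
      have hCS : (∑ j ∈ (Icc 2 n).erase j₀, (a/2 - μ j))^2
          ≤ ((((Icc 2 n).erase j₀).card : ℝ)) * ∑ j ∈ (Icc 2 n).erase j₀, (a/2 - μ j)^2 :=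
        sq_sum_le_card_mul_sum_sq
      rw [hcarde, hE1, hE2] at hCS
      have h7 : ((n:ℝ)+1)*a/2 - M = ((n:ℝ)-2)*p := by linarith only [hrel]
      rw [h7] at hCS
      linear_combination hCS
    have hp2 : ((n:ℝ)-2)*p^2 ≤ L2 - M^2 := le_of_mul_le_mul_left hCS2 hn2R
    set u : ℝ := M - p with hu_def
    clear_value u
    have hu0 : 0 ≤ u := by rw [hu_def]; linarith only [hpM]
    by_cases hc : 3*((n:ℝ)-2)*s*u^2 ≤ ((n:ℝ)+2)*(a*((n:ℝ)-1-s*a))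
    · -- tangent cubic branch
      apply final
      have hN : 0 ≤ ∑ j ∈ Icc 2 n, ((a/2 - μ j) - p)^2 * (M - (a/2 - μ j)) := by
        apply Finset.sum_nonneg
        intro j hj
        apply mul_nonneg (sq_nonneg _)
        have := hmaxj j hj
        linarith only [this]
      have hNexp : ∑ j ∈ Icc 2 n, ((a/2 - μ j) - p)^2 * (M - (a/2 - μ j))
          = -L3 + (M+2*p)*L2 - (2*p*M+p^2)*(((n:ℝ)+1)*a/2) + ((n:ℝ)-1)*(p^2*M) := by
        calc ∑ j ∈ Icc 2 n, ((a/2 - μ j) - p)^2 * (M - (a/2 - μ j))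
            = ∑ j ∈ Icc 2 n, (p^2*M - (2*p*M+p^2) * (a/2 - μ j)
                + (M+2*p) * (a/2 - μ j)^2 - (a/2 - μ j)^3) :=
              Finset.sum_congr rfl fun j _ => by ring
          _ = ∑ _j ∈ Icc 2 n, p^2*M - (2*p*M+p^2) * ∑ j ∈ Icc 2 n, (a/2 - μ j)
                + (M+2*p) * ∑ j ∈ Icc 2 n, (a/2 - μ j)^2
                - ∑ j ∈ Icc 2 n, (a/2 - μ j)^3 := by
              rw [Finset.sum_sub_distrib, Finset.sum_add_distrib, Finset.sum_sub_distrib,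
                Finset.mul_sum, Finset.mul_sum]
          _ = _ := by
              rw [Finset.sum_const, nsmul_eq_mul, hcardR, hL1, ← hL2_def, ← hL3_def]; ring
      rw [hNexp] at hN
      have hQ : ((n:ℝ)+1)*a/2*(1+a^2/4) + (p^2+2*p*M)*(((n:ℝ)+1)*a/2) - ((n:ℝ)-1)*(p^2*M)
          ≤ (2*p+M)*L2 := by linarith only [hN, hT]
      have hkey := key2 ((n:ℝ)) s a u hnR hs hs0 hμ1 hu0 hcase.le hc
      have hid := key_id ((n:ℝ)) s a p M u hs.symm hrel hu_def
      have h8 : 0 ≤ ((n:ℝ)-1)^2 * (3*s*(((n:ℝ)+1)*a/2*(1+a^2/4)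
          + (p^2+2*p*M)*(((n:ℝ)+1)*a/2) - ((n:ℝ)-1)*(p^2*M))
          - ((3*(n:ℝ)+5)*s*a^2/4 + ((n:ℝ)+2)*a)*(2*p+M)) := by
        rw [hid]; exact hkey
      have h9 : (0:ℝ) < ((n:ℝ)-1)^2 := by
        have : (0:ℝ) < (n:ℝ)-1 := by linarith only [hnR]
        positivity
      have hF1 : ((3*(n:ℝ)+5)*s*a^2/4 + ((n:ℝ)+2)*a)*(2*p+M)
          ≤ 3*s*(((n:ℝ)+1)*a/2*(1+a^2/4) + (p^2+2*p*M)*(((n:ℝ)+1)*a/2)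
            - ((n:ℝ)-1)*(p^2*M)) := by
        by_contra hc2
        push_neg at hc2
        have h10' : 3*s*(((n:ℝ)+1)*a/2*(1+a^2/4) + (p^2+2*p*M)*(((n:ℝ)+1)*a/2)
            - ((n:ℝ)-1)*(p^2*M))
            - ((3*(n:ℝ)+5)*s*a^2/4 + ((n:ℝ)+2)*a)*(2*p+M) < 0 := by
          linarith only [hc2]
        have h10 := mul_neg_of_pos_of_neg h9 h10'
        linarith only [h8, h10]
      have h2pM : 0 < 2*p + M := by linarith only [hp0, hMpos]
      have hQ3 : 3*s*(((n:ℝ)+1)*a/2*(1+a^2/4) + (p^2+2*p*M)*(((n:ℝ)+1)*a/2)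
            - ((n:ℝ)-1)*(p^2*M)) ≤ 3*s*((2*p+M)*L2) :=
        mul_le_mul_of_nonneg_left hQ (by positivity)
      have hfin : ((3*(n:ℝ)+5)*s*a^2/4 + ((n:ℝ)+2)*a)*(2*p+M) ≤ (3*(s*L2))*(2*p+M) := by
        have e : 3*s*((2*p+M)*L2) = (3*(s*L2))*(2*p+M) := by ring
        linarith only [hF1, hQ3, e]
      exact le_of_mul_le_mul_right hfin h2pM
    · -- Cauchy-Schwarz branch
      apply final
      push_neg at hc
      have hid := idF2 ((n:ℝ)) s a p M u hs.symm hrel hu_def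
      have h11 : ((n:ℝ)-1)*(((3*(n:ℝ)+5)*s*a^2/4 + ((n:ℝ)+2)*a)
          - 3*s*(M^2+((n:ℝ)-2)*p^2)) < 0 := by
        rw [hid]; linarith only [hc]
      have hF2 : (3*(n:ℝ)+5)*s*a^2/4 + ((n:ℝ)+2)*a ≤ 3*s*(M^2+((n:ℝ)-2)*p^2) := by
        by_contra hc2
        push_neg at hc2
        have h12 : (0:ℝ) ≤ ((n:ℝ)-1)*(((3*(n:ℝ)+5)*s*a^2/4 + ((n:ℝ)+2)*a)
            - 3*s*(M^2+((n:ℝ)-2)*p^2)) :=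
          mul_nonneg (by linarith only [hnR]) (by linarith only [hc2])
        linarith only [h11, h12]
      have h13a : M^2+((n:ℝ)-2)*p^2 ≤ L2 := by linarith only [hp2]
      have h13b : (0:ℝ) ≤ 3*s := by linarith only [hs0]
      have h13 : 3*s*(M^2+((n:ℝ)-2)*p^2) ≤ 3*s*L2 :=
        mul_le_mul_of_nonneg_left h13a h13b
      have e : 3*s*L2 = 3*(s*L2) := by ring
      linarith only [hF2, h13, e]
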